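/- Let q be a prime power, let n and m be positive integers with m > n, let 𝓔 be a weak egg in a (2n+m)-dimensional vector space V over the finite field F with exactly q elements that is good at an element E₁ ∈ 𝓔, and let E₂ ∈ 𝓔 \ {E₁}. Let 𝓣 = {E₁ ⊔ E₂ ⊔ E : E ∈ 𝓔 \ {E₁, E₂}} be the set of subspaces spanned by E₁, E₂ and a further element of 𝓔. Then every member of 𝓣 is a 3n-dimensional subspace containing exactly q^n + 1 elements of 𝓔, any two distinct members of 𝓣 intersect exactly in the subspace E₁ ⊔ E₂, and 𝓣 has exactly (q^m − 1)/(q^n − 1) members. -/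

import Mathlib

open Submodule Module

structure FieldStructureOn (q n : ℕ) (F : Type*) [Field F]
    (W : Type*) [AddCommGroup W] [Module F W] where
  K : Type
  [fieldK : Field K]
  [fintypeK : Fintype K]
  [algFK : Algebra F K]
  [modKW : Module K W]
  card_K : Fintype.card K = q ^ n
  compat : ∀ (a : F) (w : W), (algebraMap F K a) • w = a • w

namespace FieldStructureOn

variable {q n : ℕ} {F : Type*} [Field F] {W : Type*} [AddCommGroup W] [Module F W]

def line (fs : FieldStructureOn q n F W) (w : W) : Set W :=
  letI := fs.fieldK
  letI := fs.modKW
  Set.range fun c : fs.K => c • w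

/-- `O` is the set of `K`-lines of zeros of a nondegenerate quadratic form over `K`. -/
def ConicWitness (fs : FieldStructureOn q n F W) (O : Set (Submodule F W)) : Prop :=
  letI := fs.fieldK
  letI := fs.modKW
  ∃ Q : QuadraticForm fs.K W,
    (∀ x : W, (∀ y : W, Q (x + y) - Q x - Q y = 0) → x = 0) ∧
    O = {X : Submodule F W | ∃ w : W, w ≠ 0 ∧ Q w = 0 ∧ (X : Set W) = fs.line w}

/-- `𝓔` is the set of `K`-lines of zeros of a nondegenerate quadratic form over `K`
admitting no totally singular `2`-dimensional `K`-subspace (an elliptic quadric). -/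
def EllipticWitness (fs : FieldStructureOn q n F W) (𝓔 : Set (Submodule F W)) : Prop :=
  letI := fs.fieldK
  letI := fs.modKW
  ∃ Q : QuadraticForm fs.K W,
    (∀ x : W, (∀ y : W, Q (x + y) - Q x - Q y = 0) → x = 0) ∧
    (∀ U : Submodule fs.K W, Module.finrank fs.K U = 2 → ¬ ∀ w ∈ U, Q w = 0) ∧
    𝓔 = {X : Submodule F W | ∃ w : W, w ≠ 0 ∧ Q w = 0 ∧ (X : Set W) = fs.line w}

end FieldStructureOn

def IsDesarguesianSpread (q n : ℕ) {F : Type*} [Field F]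
    {W : Type*} [AddCommGroup W] [Module F W] (S : Set (Submodule F W)) : Prop :=
  ∃ fs : FieldStructureOn q n F W,
    S = {X : Submodule F W | ∃ w : W, w ≠ 0 ∧ (X : Set W) = fs.line w}

/-- `S`, a set of subspaces of `V` contained in `P`, is a Desarguesian spread of `P`
regarded as an `F`-vector space in its own right. -/
def IsDesarguesianSpreadIn (q n : ℕ) {F : Type*} [Field F]
    {V : Type*} [AddCommGroup V] [Module F V]
    (P : Submodule F V) (S : Set (Submodule F V)) : Prop :=
  (∀ X ∈ S, X ≤ P) ∧
  IsDesarguesianSpread q n ((fun Y : Submodule F V => Y.comap P.subtype) '' S)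

/-- A pseudo-cap: a set of `n`-dimensional subspaces, any three distinct members of
which span a subspace of dimension `3n`. -/
def IsPseudoCap (n : ℕ) {F : Type*} [Field F]
    {V : Type*} [AddCommGroup V] [Module F V] (C : Set (Submodule F V)) : Prop :=
  (∀ E ∈ C, finrank F E = n) ∧
  ∀ E₁ ∈ C, ∀ E₂ ∈ C, ∀ E₃ ∈ C,
    E₁ ≠ E₂ → E₁ ≠ E₃ → E₂ ≠ E₃ → finrank F ↥(E₁ ⊔ E₂ ⊔ E₃) = 3 * n

/-- A weak egg: a pseudo-cap of size `q ^ m + 1`. -/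
def IsWeakEgg (q n m : ℕ) {F : Type*} [Field F]
    {V : Type*} [AddCommGroup V] [Module F V] (𝓔 : Set (Submodule F V)) : Prop :=
  IsPseudoCap n 𝓔 ∧ 𝓔.ncard = q ^ m + 1

/-- An egg: a weak egg each of whose elements has a tangent space. -/
def IsEgg (q n m : ℕ) {F : Type*} [Field F]
    {V : Type*} [AddCommGroup V] [Module F V] (𝓔 : Set (Submodule F V)) : Prop :=
  IsWeakEgg q n m 𝓔 ∧
  ∀ E ∈ 𝓔, ∃ T : Submodule F V, finrank F T = n + m ∧ E ≤ T ∧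
    ∀ E' ∈ 𝓔, E' ≠ E → T ⊓ E' = ⊥

/-- A weak egg `𝓔` is good at `E` if every `3n`-dimensional subspace containing `E`
and at least two other elements of `𝓔` contains exactly `q ^ n + 1` elements of `𝓔`. -/
def IsGoodAt (q n : ℕ) {F : Type*} [Field F]
    {V : Type*} [AddCommGroup V] [Module F V]
    (𝓔 : Set (Submodule F V)) (E : Submodule F V) : Prop :=
  ∀ W : Submodule F V, finrank F W = 3 * n → E ≤ W →
    (∃ E₁ ∈ 𝓔, ∃ E₂ ∈ 𝓔, E₁ ≠ E ∧ E₂ ≠ E ∧ E₁ ≠ E₂ ∧ E₁ ≤ W ∧ E₂ ≤ W) →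
    {E' ∈ 𝓔 | E' ≤ W}.ncard = q ^ n + 1

/-- `E` induces (in `V ⧸ E`) a partial spread which extends to a Desarguesian spread. -/
def InducesDesarguesian (q n : ℕ) {F : Type*} [Field F]
    {V : Type*} [AddCommGroup V] [Module F V]
    (𝓒 : Set (Submodule F V)) (E : Submodule F V) : Prop :=
  ∃ D : Set (Submodule F (V ⧸ E)), IsDesarguesianSpread q n D ∧
    ∀ E' ∈ 𝓒, E' ≠ E → E'.map E.mkQ ∈ D

/-- A pseudo-cap is elementary if it is contained in a Desarguesian spread,
i.e. every element is a `K`-line for a compatible `K`-structure on `V`. -/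
def IsElementary (q n : ℕ) {F : Type*} [Field F]
    {V : Type*} [AddCommGroup V] [Module F V] (𝓒 : Set (Submodule F V)) : Prop :=
  ∃ fs : FieldStructureOn q n F V, ∀ X ∈ 𝓒, ∃ w : V, w ≠ 0 ∧ (X : Set V) = fs.line w

/-- `O` is a pseudo-conic in the `3n`-dimensional space `W`. -/
def IsPseudoConic (q n : ℕ) {F : Type*} [Field F]
    {W : Type*} [AddCommGroup W] [Module F W] (O : Set (Submodule F W)) : Prop :=
  ∃ fs : FieldStructureOn q n F W, fs.ConicWitness O

/-- `O`, a set of subspaces of `V` contained in `W`, is a pseudo-conic in `W`. -/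
def IsPseudoConicIn (q n : ℕ) {F : Type*} [Field F]
    {V : Type*} [AddCommGroup V] [Module F V]
    (W : Submodule F V) (O : Set (Submodule F V)) : Prop :=
  (∀ X ∈ O, X ≤ W) ∧
  IsPseudoConic q n ((fun Y : Submodule F V => Y.comap W.subtype) '' O)

/-- A weak egg in a `4n`-dimensional space is classical if it is the field reduction
of an elliptic quadric of `PG(3, q^n)`. -/
def IsClassical (q n : ℕ) {F : Type*} [Field F]
    {V : Type*} [AddCommGroup V] [Module F V] (𝓔 : Set (Submodule F V)) : Prop :=
  ∃ fs : FieldStructureOn q n F V, fs.EllipticWitness 𝓔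

/-- `C`, a set of subspaces of `V` contained in `W`, is elementary inside `W`. -/
def IsElementaryIn (q n : ℕ) {F : Type*} [Field F]
    {V : Type*} [AddCommGroup V] [Module F V]
    (W : Submodule F V) (C : Set (Submodule F V)) : Prop :=
  (∀ X ∈ C, X ≤ W) ∧
  ∃ fs : FieldStructureOn q n F ↥W,
    ∀ X ∈ C, ∃ w : ↥W, w ≠ 0 ∧ ((X.comap W.subtype : Submodule F ↥W) : Set ↥W) = fs.line w


private lemma aux_num_contra (q n w : ℕ) (hq : 2 ≤ q) (h1 : 2 * n < w) (h2 : w < 3 * n)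
    (H : 2 * (q ^ n - 1) * (q ^ (w - n) - q ^ n) ≤ q ^ w - q ^ (2 * n)) : False := by
  have hn2 : 2 ≤ n := by omega
  have hs4 : 4 ≤ q ^ n := by
    calc (4 : ℕ) = 2 ^ 2 := by norm_num
    _ ≤ 2 ^ n := Nat.pow_le_pow_right (by norm_num) hn2
    _ ≤ q ^ n := Nat.pow_le_pow_left hq n
  have hb : q ^ (n + 1) ≤ q ^ (w - n) := Nat.pow_le_pow_right (by omega) (by omega)
  have h2s : 2 * q ^ n ≤ q ^ (w - n) := by
    calc 2 * q ^ n ≤ q * q ^ n := Nat.mul_le_mul_right _ hq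
    _ = q ^ (n + 1) := by ring
    _ ≤ _ := hb
  have hw : q ^ w = q ^ (w - n) * q ^ n := by rw [← pow_add]; congr 1; omega
  have h2n : q ^ (2 * n) = q ^ n * q ^ n := by rw [← pow_add]; congr 1; omega
  set s := q ^ n with hsdef
  set b := q ^ (w - n) with hbdef
  obtain ⟨c, hc⟩ : ∃ c, b = s + c := ⟨b - s, by omega⟩
  have hcs : s ≤ c := by omega
  have e1 : q ^ w - q ^ (2 * n) = c * s := by
    rw [hw, h2n, hc, add_mul, Nat.add_sub_cancel_left (n := s * s) (m := c * s)]
  have e2 : b - s = c := by omega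
  rw [e1, e2] at H
  have hle : 2 * (s - 1) ≤ s := by
    have := Nat.le_of_mul_le_mul_right (by rwa [mul_comm c s] at H : 2 * (s - 1) * c ≤ s * c) (by omega : 0 < c)
    exact this
  omega

private lemma sum_ncard_le {β : Type*} [Finite β] {ι : Type*} [DecidableEq β]
    (I : Finset ι) (D : ι → Set β) (U : Set β)
    (hsub : ∀ i ∈ I, D i ⊆ U)
    (hdisj : ∀ i ∈ I, ∀ j ∈ I, i ≠ j → D i ∩ D j = ∅)
    (k : ℕ) (hk : ∀ i ∈ I, (D i).ncard = k) : I.card * k ≤ U.ncard := by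
  classical
  have hBU : (I.biUnion fun i => (D i).toFinite.toFinset).card
      = ∑ i ∈ I, ((D i).toFinite.toFinset).card := by
    refine Finset.card_biUnion ?_
    intro i hi j hj hij
    simp only [Function.onFun]
    rw [Finset.disjoint_left]
    intro a ha ha'
    rw [Set.Finite.mem_toFinset] at ha ha'
    have := hdisj i hi j hj hij
    exact absurd (Set.mem_inter ha ha') (by rw [this]; exact Set.notMem_empty a)
  have hsum : ∑ i ∈ I, ((D i).toFinite.toFinset).card = I.card * k := by
    refine Finset.sum_const_nat ?_
    intro i hi
    rw [← Set.ncard_eq_toFinset_card (D i)]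
    exact hk i hi
  have hss : (I.biUnion fun i => (D i).toFinite.toFinset) ⊆ U.toFinite.toFinset := by
    intro a ha
    rw [Finset.mem_biUnion] at ha
    obtain ⟨i, hi, hai⟩ := ha
    rw [Set.Finite.mem_toFinset] at hai ⊢
    exact hsub i hi hai
  calc I.card * k = _ := (hBU.trans hsum).symm
  _ ≤ U.toFinite.toFinset.card := Finset.card_le_card hss
  _ = U.ncard := (Set.ncard_eq_toFinset_card U).symm

/-- If a weak egg `𝓔` is good at `E₁` and `E₂ ∈ 𝓔 \ {E₁}`, then each member of
`𝓣 = {E₁ ⊔ E₂ ⊔ E : E ∈ 𝓔 \ {E₁, E₂}}` is a `3n`-dimensional subspace containing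
exactly `q^n + 1` elements of `𝓔`, any two distinct members of `𝓣` meet exactly in
`E₁ ⊔ E₂`, and `𝓣` has exactly `(q^m - 1)/(q^n - 1)` members. -/
theorem stmt_16 (q n m : ℕ) (hq : IsPrimePow q) (hn : 0 < n) (hm : n < m)
    (F : Type*) [Field F] [Fintype F] (hF : Fintype.card F = q)
    (V : Type*) [AddCommGroup V] [Module F V] (hV : finrank F V = 2 * n + m)
    (𝓔 : Set (Submodule F V)) (h𝓔 : IsWeakEgg q n m 𝓔)
    (E₁ : Submodule F V) (hE₁ : E₁ ∈ 𝓔) (hgood : IsGoodAt q n 𝓔 E₁)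
    (E₂ : Submodule F V) (hE₂ : E₂ ∈ 𝓔) (hne : E₂ ≠ E₁)
    (𝓣 : Set (Submodule F V))
    (h𝓣 : 𝓣 = (fun E : Submodule F V => E₁ ⊔ E₂ ⊔ E) '' (𝓔 \ {E₁, E₂})) :
    (∀ T ∈ 𝓣, finrank F T = 3 * n ∧ {E' ∈ 𝓔 | E' ≤ T}.ncard = q ^ n + 1) ∧
    (∀ T₁ ∈ 𝓣, ∀ T₂ ∈ 𝓣, T₁ ≠ T₂ → T₁ ⊓ T₂ = E₁ ⊔ E₂) ∧
    𝓣.ncard = (q ^ m - 1) / (q ^ n - 1) := by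
  classical
  obtain ⟨⟨hdim, hspan⟩, hcardE⟩ := h𝓔
  have hq2 : 2 ≤ q := hq.two_le
  have hFD : FiniteDimensional F V := FiniteDimensional.of_finrank_pos (by rw [hV]; omega)
  haveI hfinV : Finite V := Module.finite_of_finite F
  haveI : Finite (Submodule F V) :=
    Finite.of_injective (fun U : Submodule F V => (U : Set V)) SetLike.coe_injective
  have hqn2 : 2 ≤ q ^ n := le_trans hq2 (Nat.le_self_pow (by omega) q)
  have hqm2 : 2 ≤ q ^ m := le_trans hq2 (Nat.le_self_pow (by omega) q)
  -- cardinality of submodules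
  have hcardsub : ∀ U : Submodule F V, (U : Set V).ncard = q ^ finrank F U := by
    intro U
    haveI : Fintype U := Fintype.ofFinite U
    have h1 : (U : Set V).ncard = Nat.card U := by
      rw [← Nat.card_coe_set_eq]
      rfl
    rw [h1, Nat.card_eq_fintype_card, ← hF, Module.card_eq_pow_finrank (K := F) (V := U)]
  -- a third element of 𝓔 distinct from any two
  have hthird : ∀ A B : Submodule F V, ∃ C ∈ 𝓔, C ≠ A ∧ C ≠ B := by
    intro A B
    by_contra h
    push_neg at h
    have hsub : 𝓔 ⊆ {A, B} := by
      intro X hX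
      by_cases hXA : X = A
      · exact Or.inl hXA
      · exact Or.inr (h X hX hXA)
    have h1 := Set.ncard_le_ncard hsub (Set.toFinite _)
    have h2 : ({A, B} : Set (Submodule F V)).ncard ≤ 2 :=
      le_trans (Set.ncard_insert_le _ _) (by simp)
    rw [hcardE] at h1
    omega
  -- any two distinct members span a 2n-dimensional space
  have hpair : ∀ A ∈ 𝓔, ∀ B ∈ 𝓔, A ≠ B → finrank F ↥(A ⊔ B) = 2 * n := by
    intro A hA B hB hAB
    obtain ⟨C, hC, hCA, hCB⟩ := hthird A B
    have h3 := hspan A hA B hB C hC hAB (Ne.symm hCA) (Ne.symm hCB)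
    have e1 := Submodule.finrank_sup_add_finrank_inf_eq A B
    have e2 := Submodule.finrank_sup_add_finrank_inf_eq (A ⊔ B) C
    rw [hdim A hA, hdim B hB] at e1
    rw [hdim C hC, h3] at e2
    omega
  -- description of members of 𝓣
  have hmem𝓣 : ∀ T ∈ 𝓣, ∃ E ∈ 𝓔, E ≠ E₁ ∧ E ≠ E₂ ∧ T = E₁ ⊔ E₂ ⊔ E := by
    intro T hT
    rw [h𝓣] at hT
    obtain ⟨E, hE, rfl⟩ := hT
    simp only [Set.mem_diff, Set.mem_insert_iff, Set.mem_singleton_iff] at hE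
    exact ⟨E, hE.1, fun h => hE.2 (Or.inl h), fun h => hE.2 (Or.inr h), rfl⟩
  have hrank𝓣 : ∀ T ∈ 𝓣, finrank F ↥T = 3 * n := by
    intro T hT
    obtain ⟨E, hE, hE1, hE2, rfl⟩ := hmem𝓣 T hT
    exact hspan E₁ hE₁ E₂ hE₂ E hE (Ne.symm hne) (Ne.symm hE1) (Ne.symm hE2)
  have hcount𝓣 : ∀ T ∈ 𝓣, {E' ∈ 𝓔 | E' ≤ T}.ncard = q ^ n + 1 := by
    intro T hT
    obtain ⟨E, hE, hE1, hE2, rfl⟩ := hmem𝓣 T hT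
    refine hgood _ (hrank𝓣 _ hT) (le_sup_left.trans le_sup_left)
      ⟨E₂, hE₂, E, hE, hne, hE1, fun h => hE2 h.symm,
        le_sup_right.trans le_sup_left, le_sup_right⟩
  -- a member of 𝓔 inside T ∈ 𝓣 determines T
  have hkey : ∀ T ∈ 𝓣, ∀ E' ∈ 𝓔, E' ≠ E₁ → E' ≠ E₂ → E' ≤ T → E₁ ⊔ E₂ ⊔ E' = T := by
    intro T hT E' hE' h1 h2 hle
    obtain ⟨E, hE, hEa, hEb, rfl⟩ := hmem𝓣 T hT
    have h3 := hspan E₁ hE₁ E₂ hE₂ E' hE' (Ne.symm hne) (Ne.symm h1) (Ne.symm h2)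
    refine Submodule.eq_of_le_of_finrank_le
      (sup_le (sup_le (le_sup_left.trans le_sup_left) (le_sup_right.trans le_sup_left)) hle) ?_
    rw [hrank𝓣 _ hT, h3]
  -- the intersection lemma for pairs of 2n-spaces through E₁
  have hinfE₁ : ∀ A ∈ 𝓔, ∀ B ∈ 𝓔, A ≠ E₁ → B ≠ E₁ → A ≠ B →
      (A ⊔ E₁) ⊓ (B ⊔ E₁) = E₁ := by
    intro A hA B hB hA1 hB1 hAB
    have hsup : (A ⊔ E₁) ⊔ (B ⊔ E₁) = A ⊔ B ⊔ E₁ := by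
      refine le_antisymm ?_ ?_
      · exact sup_le (sup_le (le_sup_left.trans le_sup_left) le_sup_right)
          (sup_le (le_sup_right.trans le_sup_left) le_sup_right)
      · exact sup_le (sup_le (le_sup_left.trans le_sup_left) (le_sup_left.trans le_sup_right))
          (le_sup_right.trans le_sup_left)
    have h3 := hspan A hA B hB E₁ hE₁ hAB hA1 hB1
    have e := Submodule.finrank_sup_add_finrank_inf_eq (A ⊔ E₁) (B ⊔ E₁)
    rw [hsup, h3, hpair A hA E₁ hE₁ hA1, hpair B hB E₁ hE₁ hB1] at e
    refine (Submodule.eq_of_le_of_finrank_le (le_inf le_sup_right le_sup_right) ?_).symm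
    rw [hdim E₁ hE₁]
    omega
  refine ⟨fun T hT => ⟨hrank𝓣 T hT, hcount𝓣 T hT⟩, ?_, ?_⟩
  · -- Part 2
    intro T₁ hT₁ T₂ hT₂ h12
    have hE₁T₁ : E₁ ≤ T₁ := by
      obtain ⟨E, hE, _, _, rfl⟩ := hmem𝓣 T₁ hT₁; exact le_sup_left.trans le_sup_left
    have hE₂T₁ : E₂ ≤ T₁ := by
      obtain ⟨E, hE, _, _, rfl⟩ := hmem𝓣 T₁ hT₁; exact le_sup_right.trans le_sup_left
    have hE₁T₂ : E₁ ≤ T₂ := by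
      obtain ⟨E, hE, _, _, rfl⟩ := hmem𝓣 T₂ hT₂; exact le_sup_left.trans le_sup_left
    have hE₂T₂ : E₂ ≤ T₂ := by
      obtain ⟨E, hE, _, _, rfl⟩ := hmem𝓣 T₂ hT₂; exact le_sup_right.trans le_sup_left
    have hPle : E₁ ⊔ E₂ ≤ T₁ ⊓ T₂ := le_inf (sup_le hE₁T₁ hE₂T₁) (sup_le hE₁T₂ hE₂T₂)
    refine le_antisymm ?_ hPle
    by_contra hnle
    have hlt : E₁ ⊔ E₂ < T₁ ⊓ T₂ := hPle.lt_of_ne (fun h => hnle h.ge)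
    set S := T₁ ⊓ T₂ with hSdef
    set w := finrank F ↥S with hwdef
    have hw1 : 2 * n < w := by
      have := Submodule.finrank_lt_finrank_of_lt hlt
      rwa [hpair E₁ hE₁ E₂ hE₂ (Ne.symm hne)] at this
    have hSneq : S ≠ T₁ := by
      intro h
      refine h12 (Submodule.eq_of_le_of_finrank_le ?_ ?_)
      · exact h ▸ (inf_le_right : S ≤ T₂)
      · rw [hrank𝓣 T₁ hT₁, hrank𝓣 T₂ hT₂]
    have hw2 : w < 3 * n := by
      have := Submodule.finrank_lt_finrank_of_lt (lt_of_le_of_ne inf_le_left hSneq)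
      rwa [hrank𝓣 T₁ hT₁] at this
    -- the members of 𝓔 in T₁ resp. T₂ other than E₁, E₂
    set M1 : Set (Submodule F V) := {A | A ∈ 𝓔 ∧ A ≤ T₁ ∧ A ≠ E₁ ∧ A ≠ E₂} with hM1def
    set M2 : Set (Submodule F V) := {A | A ∈ 𝓔 ∧ A ≤ T₂ ∧ A ≠ E₁ ∧ A ≠ E₂} with hM2def
    have hM1eq : M1 = {E' ∈ 𝓔 | E' ≤ T₁} \ {E₁, E₂} := by
      ext A
      simp only [hM1def, Set.mem_setOf_eq, Set.mem_diff, Set.mem_sep_iff,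
        Set.mem_insert_iff, Set.mem_singleton_iff]
      tauto
    have hM2eq : M2 = {E' ∈ 𝓔 | E' ≤ T₂} \ {E₁, E₂} := by
      ext A
      simp only [hM2def, Set.mem_setOf_eq, Set.mem_diff, Set.mem_sep_iff,
        Set.mem_insert_iff, Set.mem_singleton_iff]
      tauto
    have hM1card : M1.ncard = q ^ n - 1 := by
      rw [hM1eq, Set.ncard_diff (by
        intro X hX
        rcases hX with h | h
        · exact h ▸ ⟨hE₁, hE₁T₁⟩
        · exact (Set.mem_singleton_iff.mp h) ▸ ⟨hE₂, hE₂T₁⟩) (Set.toFinite _),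
        hcount𝓣 T₁ hT₁, Set.ncard_pair (Ne.symm hne)]
      omega
    have hM2card : M2.ncard = q ^ n - 1 := by
      rw [hM2eq, Set.ncard_diff (by
        intro X hX
        rcases hX with h | h
        · exact h ▸ ⟨hE₁, hE₁T₂⟩
        · exact (Set.mem_singleton_iff.mp h) ▸ ⟨hE₂, hE₂T₂⟩) (Set.toFinite _),
        hcount𝓣 T₂ hT₂, Set.ncard_pair (Ne.symm hne)]
      omega
    have hM12 : ∀ A, A ∈ M1 → A ∈ M2 → False := by
      intro A h1 h2
      have e1 := hkey T₁ hT₁ A h1.1 h1.2.2.1 h1.2.2.2 h1.2.1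
      have e2 := hkey T₂ hT₂ A h2.1 h2.2.2.1 h2.2.2.2 h2.2.1
      exact h12 (e1.symm.trans e2)
    set Mset := M1 ∪ M2 with hMsetdef
    have hMel : ∀ A ∈ Mset, A ∈ 𝓔 ∧ A ≠ E₁ ∧ A ≠ E₂ := by
      intro A hA
      rcases hA with h | h
      · exact ⟨h.1, h.2.2.1, h.2.2.2⟩
      · exact ⟨h.1, h.2.2.1, h.2.2.2⟩
    have hMcard : Mset.ncard = 2 * (q ^ n - 1) := by
      rw [hMsetdef, Set.ncard_union_eq (Set.disjoint_left.mpr hM12)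
        (Set.toFinite _) (Set.toFinite _), hM1card, hM2card]
      ring
    have hE₁S : E₁ ≤ S := le_sup_left.trans hPle
    have hE₁C : ∀ A : Submodule F V, E₁ ≤ (A ⊔ E₁) ⊓ S := fun A => le_inf le_sup_right hE₁S
    have hsupS : ∀ A ∈ Mset, finrank F ↥((A ⊔ E₁) ⊔ S) = 3 * n := by
      intro A hA
      rcases hA with h | h
      · have e := hkey T₁ hT₁ A h.1 h.2.2.1 h.2.2.2 h.2.1
        have hle1 : (A ⊔ E₁) ⊔ S ≤ T₁ := sup_le (sup_le h.2.1 hE₁T₁) inf_le_left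
        have hle2 : T₁ ≤ (A ⊔ E₁) ⊔ S := by
          rw [← e]
          refine sup_le (sup_le ?_ ?_) ?_
          · exact le_sup_right.trans le_sup_left
          · exact (le_sup_right.trans hPle).trans le_sup_right
          · exact le_sup_left.trans le_sup_left
        rw [le_antisymm hle1 hle2]
        exact hrank𝓣 T₁ hT₁
      · have e := hkey T₂ hT₂ A h.1 h.2.2.1 h.2.2.2 h.2.1
        have hle1 : (A ⊔ E₁) ⊔ S ≤ T₂ := sup_le (sup_le h.2.1 hE₁T₂) inf_le_right
        have hle2 : T₂ ≤ (A ⊔ E₁) ⊔ S := by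
          rw [← e]
          refine sup_le (sup_le ?_ ?_) ?_
          · exact le_sup_right.trans le_sup_left
          · exact (le_sup_right.trans hPle).trans le_sup_right
          · exact le_sup_left.trans le_sup_left
        rw [le_antisymm hle1 hle2]
        exact hrank𝓣 T₂ hT₂
    have hCrank : ∀ A ∈ Mset, finrank F ↥((A ⊔ E₁) ⊓ S) = w - n := by
      intro A hA
      obtain ⟨hA𝓔, hA1, hA2⟩ := hMel A hA
      have h2n := hpair A hA𝓔 E₁ hE₁ hA1
      have e := Submodule.finrank_sup_add_finrank_inf_eq (A ⊔ E₁) S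
      rw [hsupS A hA, h2n, ← hwdef] at e
      omega
    set D : Submodule F V → Set V :=
      fun A => (((A ⊔ E₁) ⊓ S : Submodule F V) : Set V) \ (E₁ : Set V) with hDdef
    have hDcard : ∀ A ∈ Mset, (D A).ncard = q ^ (w - n) - q ^ n := by
      intro A hA
      have h1 := Set.ncard_diff (SetLike.coe_subset_coe.mpr (hE₁C A)) (Set.toFinite _)
      simp only [hDdef]
      rw [h1, hcardsub, hcardsub, hCrank A hA, hdim E₁ hE₁]
    have hDsub : ∀ A ∈ Mset, D A ⊆ (S : Set V) \ ((E₁ ⊔ E₂ : Submodule F V) : Set V) := by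
      intro A hA x hx
      obtain ⟨hA𝓔, hA1, hA2⟩ := hMel A hA
      simp only [hDdef] at hx
      obtain ⟨hxC, hxE₁⟩ := hx
      rw [SetLike.mem_coe] at hxC
      refine ⟨(inf_le_right : (A ⊔ E₁) ⊓ S ≤ S) hxC, fun hxP => hxE₁ ?_⟩
      rw [SetLike.mem_coe] at hxP
      have hx2 : x ∈ (A ⊔ E₁) ⊓ (E₂ ⊔ E₁) :=
        ⟨(inf_le_left : (A ⊔ E₁) ⊓ S ≤ A ⊔ E₁) hxC, by rwa [sup_comm E₂ E₁]⟩
      rw [hinfE₁ A hA𝓔 E₂ hE₂ hA1 hne hA2] at hx2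
      exact hx2
    have hDdisj : ∀ A ∈ Mset, ∀ B ∈ Mset, A ≠ B → D A ∩ D B = ∅ := by
      intro A hA B hB hAB
      obtain ⟨hA𝓔, hA1, _⟩ := hMel A hA
      obtain ⟨hB𝓔, hB1, _⟩ := hMel B hB
      ext x
      simp only [hDdef, Set.mem_inter_iff, Set.mem_diff, SetLike.mem_coe,
        Set.mem_empty_iff_false, iff_false]
      rintro ⟨⟨hxA, hx1⟩, hxB, -⟩
      apply hx1
      have hx2 : x ∈ (A ⊔ E₁) ⊓ (B ⊔ E₁) :=
        ⟨(inf_le_left : (A ⊔ E₁) ⊓ S ≤ A ⊔ E₁) hxA, (inf_le_left : (B ⊔ E₁) ⊓ S ≤ B ⊔ E₁) hxB⟩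
      rw [hinfE₁ A hA𝓔 B hB𝓔 hA1 hB1 hAB] at hx2
      exact hx2
    have hMfin : Mset.Finite := Set.toFinite _
    have hIcount := sum_ncard_le hMfin.toFinset D
      ((S : Set V) \ ((E₁ ⊔ E₂ : Submodule F V) : Set V))
      (fun A hA => hDsub A (hMfin.mem_toFinset.mp hA))
      (fun A hA B hB hAB => hDdisj A (hMfin.mem_toFinset.mp hA) B (hMfin.mem_toFinset.mp hB) hAB)
      (q ^ (w - n) - q ^ n)
      (fun A hA => hDcard A (hMfin.mem_toFinset.mp hA))
    have hIcard : hMfin.toFinset.card = 2 * (q ^ n - 1) := by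
      rw [← Set.ncard_eq_toFinset_card Mset hMfin]
      exact hMcard
    have hRHS : ((S : Set V) \ ((E₁ ⊔ E₂ : Submodule F V) : Set V)).ncard
        = q ^ w - q ^ (2 * n) := by
      rw [Set.ncard_diff (SetLike.coe_subset_coe.mpr hPle) (Set.toFinite _),
        hcardsub, hcardsub, hpair E₁ hE₁ E₂ hE₂ (Ne.symm hne), ← hwdef]
    rw [hIcard, hRHS] at hIcount
    exact absurd hIcount (fun H => aux_num_contra q n w hq2 hw1 hw2 H)
  · -- Part 3
    have hfinG : (𝓔 \ ({E₁, E₂} : Set (Submodule F V))).Finite := Set.toFinite _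
    have h𝓣fin : 𝓣.Finite := Set.toFinite _
    have hfiber : ∀ T ∈ 𝓣,
        {E ∈ 𝓔 \ ({E₁, E₂} : Set (Submodule F V)) | E₁ ⊔ E₂ ⊔ E = T}.ncard = q ^ n - 1 := by
      intro T hT
      have hE₁T : E₁ ≤ T := by
        obtain ⟨E, hE, _, _, rfl⟩ := hmem𝓣 T hT; exact le_sup_left.trans le_sup_left
      have hE₂T : E₂ ≤ T := by
        obtain ⟨E, hE, _, _, rfl⟩ := hmem𝓣 T hT; exact le_sup_right.trans le_sup_left
      have hsetEq : {E ∈ 𝓔 \ ({E₁, E₂} : Set (Submodule F V)) | E₁ ⊔ E₂ ⊔ E = T}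
          = {E' ∈ 𝓔 | E' ≤ T} \ {E₁, E₂} := by
        ext A
        simp only [Set.mem_sep_iff, Set.mem_diff, Set.mem_insert_iff, Set.mem_singleton_iff]
        constructor
        · rintro ⟨⟨hA, hA12⟩, hsup⟩
          exact ⟨⟨hA, hsup ▸ le_sup_right⟩, hA12⟩
        · rintro ⟨⟨hA, hle⟩, hA12⟩
          exact ⟨⟨hA, hA12⟩, hkey T hT A hA (fun h => hA12 (Or.inl h))
            (fun h => hA12 (Or.inr h)) hle⟩
      rw [hsetEq, Set.ncard_diff (by
        intro X hX
        rcases hX with h | h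
        · exact h ▸ ⟨hE₁, hE₁T⟩
        · exact (Set.mem_singleton_iff.mp h) ▸ ⟨hE₂, hE₂T⟩) (Set.toFinite _),
        hcount𝓣 T hT, Set.ncard_pair (Ne.symm hne)]
      omega
    have hmain : (𝓔 \ ({E₁, E₂} : Set (Submodule F V))).ncard = 𝓣.ncard * (q ^ n - 1) := by
      have hmaps : ∀ E ∈ hfinG.toFinset, (E₁ ⊔ E₂ ⊔ E) ∈ h𝓣fin.toFinset := by
        intro E hEm
        rw [Set.Finite.mem_toFinset] at hEm ⊢
        rw [h𝓣]
        exact ⟨E, hEm, rfl⟩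
      have hsum := Finset.card_eq_sum_card_fiberwise hmaps
      have hterm : ∀ T ∈ h𝓣fin.toFinset,
          (hfinG.toFinset.filter (fun E => E₁ ⊔ E₂ ⊔ E = T)).card = q ^ n - 1 := by
        intro T hTm
        rw [Set.Finite.mem_toFinset] at hTm
        have hf := hfiber T hTm
        rw [Set.ncard_eq_toFinset_card _ (Set.toFinite _)] at hf
        rw [← hf]
        congr 1
        ext A
        simp only [Finset.mem_filter, Set.Finite.mem_toFinset, Set.mem_sep_iff]
      rw [Finset.sum_const_nat hterm] at hsum
      rw [Set.ncard_eq_toFinset_card _ hfinG, Set.ncard_eq_toFinset_card _ h𝓣fin]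
      exact hsum
    have hGcard : (𝓔 \ ({E₁, E₂} : Set (Submodule F V))).ncard = q ^ m - 1 := by
      rw [Set.ncard_diff (by
        intro X hX
        rcases hX with h | h
        · exact h ▸ hE₁
        · exact (Set.mem_singleton_iff.mp h) ▸ hE₂) (Set.toFinite _),
        hcardE, Set.ncard_pair (Ne.symm hne)]
      omega
    have hpos : 0 < q ^ n - 1 := by omega
    have heq : q ^ m - 1 = 𝓣.ncard * (q ^ n - 1) := hGcard.symm.trans hmain
    exact (Nat.div_eq_of_eq_mul_left hpos heq).symm
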